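/- A Fibonacci number F_n is of the form 2m² + 2 for some integer m if and only if F_n ∈ {2, 34}. -/

import Mathlib

open Nat
def luc : ℕ → ℕ
  | 0 => 2
  | 1 => 1
  | n + 2 => luc n + luc (n + 1)
lemma luc_add_two (n : ℕ) : luc (n + 2) = luc n + luc (n + 1) := rfl
lemma two_step {P : ℕ → Prop} (h0 : P 0) (h1 : P 1)
    (ih : ∀ n, P n → P (n + 1) → P (n + 2)) : ∀ n, P n := by
  have key : ∀ n, P n ∧ P (n + 1) := by
    intro n
    induction n with
    | zero => exact ⟨h0, h1⟩
    | succ k h => exact ⟨h.2, ih k h.1 h.2⟩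
  exact fun n => (key n).1
lemma fib2 (n : ℕ) : (fib (n + 2) : ℤ) = fib n + fib (n + 1) := by
  rw [Nat.fib_add_two]; push_cast; ring
lemma fib3 (n : ℕ) : (fib (n + 3) : ℤ) = fib n + 2 * fib (n + 1) := by
  have := fib2 (n + 1)
  rw [show n + 1 + 2 = n + 3 from rfl, show n + 1 + 1 = n + 2 from rfl] at this
  rw [this, fib2]; ring
lemma fib4 (n : ℕ) : (fib (n + 4) : ℤ) = 2 * fib n + 3 * fib (n + 1) := by
  have := fib2 (n + 2)
  rw [show n + 2 + 2 = n + 4 from rfl, show n + 2 + 1 = n + 3 from rfl] at this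
  rw [this, fib3, fib2]; ring
lemma lucZ : ∀ n, (luc n : ℤ) = 2 * fib (n + 1) - fib n := by
  apply two_step
  · simp [luc]
  · simp [luc]
  · intro n h1 h2
    rw [luc_add_two]
    push_cast
    rw [h1, h2, show n + 1 + 1 = n + 2 from rfl, show n + 2 + 1 = n + 3 from rfl,
      fib3, fib2]
    ring
lemma cassini : ∀ n, (fib (n + 1) : ℤ) ^ 2 - fib n * (fib n + fib (n + 1)) = (-1) ^ n := by
  intro n
  induction n with
  | zero => norm_num
  | succ k ih =>
    rw [show k + 1 + 1 = k + 2 from rfl, fib2 k, pow_succ]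
    ring_nf
    ring_nf at ih
    linarith

lemma luc_t3 (n : ℕ) : (luc (n + 3) : ℤ) = 3 * fib n + 4 * fib (n + 1) := by
  rw [lucZ, show n + 3 + 1 = n + 4 from rfl, fib4, fib3]; ring

lemma fib_2t3 (t : ℕ) :
    (fib (2 * t + 3) : ℤ) = fib t * fib (t + 2) + fib (t + 1) * fib (t + 3) := by
  have := Nat.fib_add t (t + 2)
  rw [show t + (t + 2) + 1 = 2 * t + 3 by omega, show t + 2 + 1 = t + 3 from rfl] at this
  exact_mod_cast this

lemma id1 (t : ℕ) : (fib (2 * t + 3) : ℤ) = fib t * luc (t + 3) + 2 * (-1) ^ t := by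
  rw [fib_2t3, luc_t3, fib3, fib2]
  linear_combination 2 * cassini t

lemma id2 (t : ℕ) : (fib (2 * t + 3) : ℤ) = luc t * fib (t + 3) - 2 * (-1) ^ t := by
  rw [fib_2t3, lucZ, fib3, fib2]
  linear_combination -2 * cassini t

lemma luc_sq (t : ℕ) : (luc t : ℤ) ^ 2 - 5 * (fib t : ℤ) ^ 2 = 4 * (-1) ^ t := by
  rw [lucZ]
  linear_combination 4 * cassini t

lemma lin1 (t : ℕ) : 2 * (luc (t + 3) : ℤ) = 10 * fib t + 4 * luc t := by
  rw [luc_t3, lucZ]; ring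

lemma lin2 (t : ℕ) : 2 * (fib (t + 3) : ℤ) = 4 * fib t + 2 * luc t := by
  rw [fib3, lucZ]; ring

lemma luc_two_mul (b : ℕ) : (luc (2 * b) : ℤ) = luc b * luc b - 2 * (-1) ^ b := by
  have h1 : (fib (2 * b + 1) : ℤ) = fib b * fib b + fib (b + 1) * fib (b + 1) := by
    have := Nat.fib_add b b
    rw [show b + b + 1 = 2 * b + 1 by omega] at this
    exact_mod_cast this
  have h2 : (fib (2 * b + 2) : ℤ) = fib b * fib (b + 1) + fib (b + 1) * fib (b + 2) := by
    have := Nat.fib_add b (b + 1)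
    rw [show b + (b + 1) + 1 = 2 * b + 2 by omega, show b + 1 + 1 = b + 2 from rfl] at this
    exact_mod_cast this
  have h0 : (fib (2 * b) : ℤ) = fib (2 * b + 2) - fib (2 * b + 1) := by
    have := fib2 (2 * b); linarith
  rw [lucZ (2 * b), h0, h2, h1, fib2, lucZ b]
  linear_combination -2 * cassini b

lemma luc_two_mul_add_one (b : ℕ) :
    (luc (2 * b + 1) : ℤ) = luc (b + 1) * luc b - (-1) ^ b := by
  have h1 : (fib (2 * b + 1) : ℤ) = fib b * fib b + fib (b + 1) * fib (b + 1) := by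
    have := Nat.fib_add b b
    rw [show b + b + 1 = 2 * b + 1 by omega] at this
    exact_mod_cast this
  have h2 : (fib (2 * b + 2) : ℤ) = fib b * fib (b + 1) + fib (b + 1) * fib (b + 2) := by
    have := Nat.fib_add b (b + 1)
    rw [show b + (b + 1) + 1 = 2 * b + 2 by omega, show b + 1 + 1 = b + 2 from rfl] at this
    exact_mod_cast this
  rw [lucZ (2 * b + 1), show 2 * b + 1 + 1 = 2 * b + 2 from rfl, h2, h1, lucZ (b + 1),
    show b + 1 + 1 = b + 2 from rfl, fib2, lucZ b]
  linear_combination - cassini b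

lemma luc_add_two_mul (b : ℕ) :
    ∀ c, (luc (c + 2 * b) : ℤ) = luc (c + b) * luc b - (-1) ^ b * luc c := by
  apply two_step
  · rw [Nat.zero_add, Nat.zero_add, luc_two_mul]
    norm_num [luc]
    ring
  · rw [show 1 + 2 * b = 2 * b + 1 by omega, show 1 + b = b + 1 by omega,
      luc_two_mul_add_one]
    norm_num [luc]
  · intro c ih1 ih2
    rw [show c + 2 + 2 * b = c + 2 * b + 2 by omega, show c + 2 + b = c + b + 2 by omega,
      luc_add_two (c + 2 * b), luc_add_two (c + b), luc_add_two c,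
      show c + 2 * b + 1 = c + 1 + 2 * b by omega, show c + b + 1 = c + 1 + b by omega]
    push_cast
    rw [ih1, ih2]
    ring

lemma per_gen {M P : ℕ} (f : ℕ → ℕ) (hrec : ∀ n, f (n + 2) = f n + f (n + 1))
    (h0 : f P % M = f 0 % M) (h1 : f (P + 1) % M = f 1 % M) :
    ∀ t, f (t + P) % M = f t % M := by
  apply two_step
  · rw [Nat.zero_add]; exact h0
  · rw [show 1 + P = P + 1 by omega]; exact h1
  · intro t ih1 ih2
    have e1 := hrec (t + P)
    rw [show t + P + 2 = t + 2 + P by omega, show t + P + 1 = t + 1 + P by omega] at e1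
    rw [e1, hrec t]
    exact Nat.ModEq.add ih1 ih2

lemma period_red {f : ℕ → ℕ} {P M : ℕ} (hP : 0 < P)
    (hper : ∀ t, f (t + P) % M = f t % M) : ∀ t, f t % M = f (t % P) % M := by
  intro t
  induction t using Nat.strong_induction_on with
  | _ t ih =>
    rcases lt_or_ge t P with h | h
    · rw [Nat.mod_eq_of_lt h]
    · obtain ⟨s, rfl⟩ : ∃ s, t = s + P := ⟨t - P, by omega⟩
      rw [hper s, ih s (by omega), Nat.add_mod_right]

lemma fib_red8 (t : ℕ) : fib t % 8 = fib (t % 12) % 8 :=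
  period_red (by norm_num)
    (per_gen fib (fun n => Nat.fib_add_two) (by decide) (by decide)) t

lemma luc_red8 (t : ℕ) : luc t % 8 = luc (t % 12) % 8 :=
  period_red (by norm_num) (per_gen luc luc_add_two (by decide) (by decide)) t

lemma fib_red16 (t : ℕ) : fib t % 16 = fib (t % 24) % 16 :=
  period_red (by norm_num)
    (per_gen fib (fun n => Nat.fib_add_two) (by decide) (by decide)) t

lemma luc4 {u : ℕ} (hu : u % 6 = 3) : ∃ c, luc u = 4 * c ∧ c % 2 = 1 := by
  have h := luc_red8 u
  have h12 : u % 12 = 3 ∨ u % 12 = 9 := by omega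
  have e3 : luc 3 = 4 := by decide
  have e9 : luc 9 = 76 := by decide
  have h8 : luc u % 8 = 4 := by
    rcases h12 with h' | h' <;> rw [h'] at h
    · rw [e3] at h; omega
    · rw [e9] at h; omega
  exact ⟨luc u / 4, by omega⟩

lemma fib8 {u : ℕ} (hu : u % 6 = 0) : 8 ∣ fib u := by
  have h := fib_red8 u
  have h12 : u % 12 = 0 ∨ u % 12 = 6 := by omega
  have e0 : fib 0 = 0 := rfl
  have e6 : fib 6 = 8 := by decide
  rcases h12 with h' | h' <;> rw [h'] at h
  · rw [e0] at h; omega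
  · rw [e6] at h; omega

lemma luc_pow2 : ∀ i, 1 ≤ i → luc (2 ^ i) % 4 = 3 ∧ luc (2 ^ i) % 2 = 1 := by
  intro i
  induction i with
  | zero => omega
  | succ k ih =>
    intro _
    rcases Nat.eq_zero_or_pos k with rfl | hk
    · decide
    · obtain ⟨h4, h2⟩ := ih hk
      have hid := luc_two_mul (2 ^ k)
      rw [show 2 * 2 ^ k = 2 ^ (k + 1) by rw [pow_succ]; ring] at hid
      have hev : ((-1 : ℤ)) ^ (2 ^ k) = 1 :=
        Even.neg_one_pow (even_iff_two_dvd.mpr (dvd_pow_self 2 (by omega)))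
      obtain ⟨a, ha⟩ : ∃ a, luc (2 ^ k) = 4 * a + 3 := ⟨luc (2 ^ k) / 4, by omega⟩
      have hz : (luc (2 ^ (k + 1)) : ℤ) = 16 * (a : ℤ) ^ 2 + 24 * a + 7 := by
        rw [hid, hev, ha]; push_cast; ring
      obtain ⟨X, hX⟩ : ∃ X, luc (2 ^ (k + 1)) = 16 * X + 24 * a + 7 :=
        ⟨a ^ 2, by exact_mod_cast hz⟩
      omega

lemma luc_cong (m : ℕ) (hm : 2 ∣ m) :
    ∀ h k : ℕ, (luc (k + 2 * m * h) : ℤ) ≡ (-1) ^ h * luc k [ZMOD (luc m : ℤ)] := by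
  intro h
  induction h with
  | zero => intro k; simp
  | succ j ih =>
    intro k
    have hstep : (luc (k + 2 * m * j + 2 * m) : ℤ) ≡ -(luc (k + 2 * m * j) : ℤ)
        [ZMOD (luc m : ℤ)] := by
      have hident := luc_add_two_mul m (k + 2 * m * j)
      have hev : ((-1 : ℤ)) ^ m = 1 := Even.neg_one_pow (even_iff_two_dvd.mpr hm)
      rw [hev, one_mul] at hident
      exact Int.ModEq.symm (Int.modEq_iff_dvd.mpr
        ⟨(luc (k + 2 * m * j + m) : ℤ), by rw [hident]; ring⟩)
    have htr := hstep.trans ((ih k).neg)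
    rw [show k + 2 * m * (j + 1) = k + 2 * m * j + 2 * m by ring]
    have heq : ((-1 : ℤ)) ^ (j + 1) * luc k = -((-1 : ℤ) ^ j * luc k) := by ring
    rw [heq]
    exact htr

lemma cohn_aux (r N y : ℕ) (hr : r = 1 ∨ r = 3) (hN0 : 0 < N) (hN4 : 4 ∣ N)
    (h : luc (r + N) = y ^ 2) : False := by
  obtain ⟨e, q, hq, hNe⟩ := Nat.exists_eq_pow_mul_and_not_dvd hN0.ne' 2 (by norm_num)
  have he2 : 2 ≤ e := by
    by_contra h'
    push_neg at h'
    interval_cases e <;> simp only [pow_zero, pow_one, one_mul] at hNe <;> omega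
  set m := 2 ^ (e - 1) with hmdef
  have hm2 : 2 ∣ m := dvd_pow_self 2 (by omega)
  have hNeq : N = 2 * m * q := by
    have hpow : 2 * m = 2 ^ e := by
      rw [hmdef, ← pow_succ']; congr 1; omega
    rw [hNe, ← hpow]
  have hcong := luc_cong m hm2 q r
  rw [← hNeq, h] at hcong
  have hqodd : ((-1 : ℤ)) ^ q = -1 := Odd.neg_one_pow (Nat.odd_iff.mpr (by omega))
  rw [hqodd] at hcong
  obtain ⟨hm4, hmodd⟩ := luc_pow2 (e - 1) (by omega)
  rw [← hmdef] at hm4 hmodd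
  have hLodd : Odd (luc m) := Nat.odd_iff.mpr hmodd
  obtain ⟨w, hw, hwL⟩ : ∃ w : ℕ, luc r = w ^ 2 ∧ Nat.Coprime w (luc m) := by
    rcases hr with rfl | rfl
    · exact ⟨1, by decide, Nat.coprime_one_left _⟩
    · refine ⟨2, by decide, ?_⟩
      rw [Nat.Prime.coprime_iff_not_dvd Nat.prime_two]
      omega
  rw [hw] at hcong
  have hcong' : ((y : ℤ)) ^ 2 ≡ -((w : ℤ) ^ 2) [ZMOD (luc m : ℤ)] := by
    have : ((-1 : ℤ)) * ((w ^ 2 : ℕ) : ℤ) = -((w : ℤ) ^ 2) := by push_cast; ring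
    rw [this] at hcong
    have hy2 : (((y ^ 2 : ℕ) : ℤ)) = ((y : ℤ)) ^ 2 := by push_cast; ring
    rw [hy2] at hcong
    exact hcong
  have hJ : jacobiSym ((y : ℤ) ^ 2) (luc m) = jacobiSym (-((w : ℤ) ^ 2)) (luc m) :=
    jacobiSym.mod_left' hcong'
  rw [jacobiSym.pow_left] at hJ
  rw [jacobiSym.neg _ hLodd] at hJ
  have hsq1 : jacobiSym ((w : ℤ) ^ 2) (luc m) = 1 := by
    apply jacobiSym.sq_one'
    rwa [Int.gcd_natCast_natCast]
  rw [hsq1, mul_one, ZMod.χ₄_nat_three_mod_four hm4] at hJ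
  nlinarith [sq_nonneg (jacobiSym (y : ℤ) (luc m))]

lemma luc_odd_square {u : ℕ} (hu : u % 2 = 1) {y : ℕ} (hy : luc u = y ^ 2) :
    u = 1 ∨ u = 3 := by
  by_contra hcon
  push_neg at hcon
  obtain ⟨h1, h3⟩ := hcon
  have h4 : u % 4 = 1 ∨ u % 4 = 3 := by omega
  rcases h4 with h | h
  · exact cohn_aux 1 (u - 1) y (Or.inl rfl) (by omega) (by omega)
      (by rw [show 1 + (u - 1) = u by omega]; exact hy)
  · exact cohn_aux 3 (u - 3) y (Or.inr rfl) (by omega) (by omega)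
      (by rw [show 3 + (u - 3) = u by omega]; exact hy)

lemma not_dvd_both {p : ℕ} (hp : p.Prime) (hp2 : p ≠ 2) (t : ℕ)
    (hf : (p : ℤ) ∣ (fib t : ℤ)) (hl : (p : ℤ) ∣ (luc t : ℤ)) : False := by
  have hdvd : (p : ℤ) ∣ 4 * (-1) ^ t := by
    rw [← luc_sq t]
    exact dvd_sub (dvd_pow hl two_ne_zero) ((dvd_pow hf two_ne_zero).mul_left 5)
  have h4 : (p : ℤ) ∣ 4 := by
    rcases Nat.even_or_odd t with he | he
    · rwa [he.neg_one_pow, mul_one] at hdvd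
    · rw [he.neg_one_pow, mul_neg_one] at hdvd
      exact (dvd_neg).mp hdvd
  have h4' : p ∣ 4 := by exact_mod_cast h4
  rw [show (4 : ℕ) = 2 ^ 2 from rfl] at h4'
  exact hp2 ((Nat.prime_dvd_prime_iff_eq hp Nat.prime_two).mp (hp.dvd_of_dvd_pow h4'))

lemma odd_prime_dvd_of_dvd_four_mul {p : ℕ} (hp : p.Prime) (hp2 : p ≠ 2) {a : ℤ}
    (h : (p : ℤ) ∣ 4 * a) : (p : ℤ) ∣ a := by
  rcases (Nat.prime_iff_prime_int.mp hp).dvd_mul.mp h with h' | h'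
  · exfalso
    have h4' : p ∣ 4 := by exact_mod_cast h'
    rw [show (4 : ℕ) = 2 ^ 2 from rfl] at h4'
    exact hp2 ((Nat.prime_dvd_prime_iff_eq hp Nat.prime_two).mp (hp.dvd_of_dvd_pow h4'))
  · exact h'

lemma final_step (F L : ℕ) (x : ℤ) (hF8 : 8 ∣ F)
    (hLc : ∃ c, L = 4 * c ∧ c % 2 = 1)
    (hodd : ∀ p : ℕ, p.Prime → p ≠ 2 → (p : ℤ) ∣ (F : ℤ) → (p : ℤ) ∣ (L : ℤ) → False)
    (hprod : (F : ℤ) * L = 32 * x ^ 2) : ∃ y : ℕ, L = y ^ 2 := by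
  obtain ⟨c, hc, hcodd⟩ := hLc
  obtain ⟨d, hd⟩ := hF8
  have h8 : (F : ℤ) = 8 * d := by exact_mod_cast hd
  have h4 : (L : ℤ) = 4 * c := by exact_mod_cast hc
  rw [h8, h4] at hprod
  have hx : (c : ℤ) * d = x ^ 2 := by
    have h32 : (32 : ℤ) * ((c : ℤ) * d) = 32 * x ^ 2 := by linear_combination hprod
    exact mul_left_cancel₀ (by norm_num) h32
  have hcop : IsCoprime (c : ℤ) (d : ℤ) := by
    rw [Int.isCoprime_iff_gcd_eq_one, Int.gcd_natCast_natCast]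
    by_contra hg
    obtain ⟨p, hp, hpc, hpd⟩ := Nat.Prime.not_coprime_iff_dvd.mp hg
    have hp2 : p ≠ 2 := by rintro rfl; omega
    apply hodd p hp hp2
    · rw [h8]
      exact Dvd.dvd.mul_left (Int.natCast_dvd_natCast.mpr hpd) 8
    · rw [h4]
      exact Dvd.dvd.mul_left (Int.natCast_dvd_natCast.mpr hpc) 4
  obtain ⟨c0, hc0 | hc0⟩ := Int.sq_of_isCoprime hcop hx
  · refine ⟨2 * c0.natAbs, ?_⟩
    have hz : (L : ℤ) = ((2 * c0.natAbs : ℕ) : ℤ) ^ 2 := by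
      rw [h4, hc0]
      push_cast
      rw [mul_pow, sq_abs]
      ring
    exact_mod_cast hz
  · exfalso
    have hc1 : (1 : ℤ) ≤ (c : ℤ) := by exact_mod_cast (by omega : 1 ≤ c)
    rw [hc0] at hc1
    nlinarith [sq_nonneg c0]

lemma key_mod : ∀ r < 24, ∀ s < 8, fib r % 16 = (2 * s ^ 2 + 2) % 16 →
    r % 6 = 3 ∧ s % 4 = 0 := by decide

/-- **Theorem.** A Fibonacci number is of the form `2m² + 2` iff it is `2` or `34`. -/
theorem stmt12 (n : ℕ) :
    (∃ m : ℤ, (Nat.fib n : ℤ) = 2 * m ^ 2 + 2) ↔ Nat.fib n ∈ ({2, 34} : Set ℕ) := by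
  constructor
  · rintro ⟨m, hm⟩
    have hs0 : 0 ≤ m % 8 := Int.emod_nonneg m (by norm_num)
    have hs8 : m % 8 < 8 := Int.emod_lt_of_pos m (by norm_num)
    set s : ℤ := m % 8 with hsdef
    obtain ⟨j, hj⟩ : ∃ j, m = 8 * j + s := ⟨m / 8, by omega⟩
    have hsq : (2 * m ^ 2 + 2) % 16 = (2 * s ^ 2 + 2) % 16 := by
      have he : 2 * m ^ 2 + 2 =
          (2 * s ^ 2 + 2) + 16 * (8 * j ^ 2 + 2 * j * s) := by
        rw [hj]; ring
      rw [he, Int.add_mul_emod_self_left]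
    set sN : ℕ := s.toNat with hsNdef
    have hsNs : (sN : ℤ) = s := Int.toNat_of_nonneg hs0
    have hZ : ((fib n % 16 : ℕ) : ℤ) = (((2 * sN ^ 2 + 2) % 16 : ℕ) : ℤ) := by
      rw [Int.natCast_mod, Int.natCast_mod]
      push_cast
      rw [hm, hsNs]
      exact hsq
    have hfib16 : fib n % 16 = (2 * sN ^ 2 + 2) % 16 := by exact_mod_cast hZ
    obtain ⟨hr6, hs4⟩ := key_mod (n % 24) (by omega) sN (by omega)
      (by rw [← fib_red16]; exact hfib16)
    have hm4 : m % 4 = 0 := by omega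
    obtain ⟨x, hxm⟩ : ∃ x, m = 4 * x := ⟨m / 4, by omega⟩
    obtain ⟨k, rfl⟩ : ∃ k, n = 6 * k + 3 := ⟨n / 6, by omega⟩
    have h32 : (fib (6 * k + 3) : ℤ) = 32 * x ^ 2 + 2 := by rw [hm, hxm]; ring
    rcases Nat.even_or_odd k with ⟨i, hi⟩ | ⟨i, hi⟩
    · -- k even : fib(3k) * luc(3k+3) = 32 x²
      have hid := id1 (3 * k)
      rw [show 2 * (3 * k) + 3 = 6 * k + 3 by ring] at hid
      have hev : ((-1 : ℤ)) ^ (3 * k) = 1 := Even.neg_one_pow ⟨3 * i, by omega⟩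
      rw [hev] at hid
      have hprod : (fib (3 * k) : ℤ) * luc (3 * k + 3) = 32 * x ^ 2 := by
        rw [hid] at h32; linarith
      obtain ⟨y, hy⟩ := final_step (fib (3 * k)) (luc (3 * k + 3)) x
        (fib8 (by omega)) (luc4 (by omega))
        (fun p hp hp2 hpf hpl => by
          have hlin := lin1 (3 * k)
          have h4l : (p : ℤ) ∣ 4 * (luc (3 * k) : ℤ) := by
            have : (4 : ℤ) * luc (3 * k) = 2 * luc (3 * k + 3) - 10 * fib (3 * k) := by
              linarith
            rw [this]
            exact dvd_sub (hpl.mul_left 2) (hpf.mul_left 10)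
          exact not_dvd_both hp hp2 (3 * k) hpf
            (odd_prime_dvd_of_dvd_four_mul hp hp2 h4l))
        hprod
      have hodd33 : (3 * k + 3) % 2 = 1 := by omega
      have := luc_odd_square hodd33 hy
      have hk0 : k = 0 := by omega
      subst hk0
      have : fib (6 * 0 + 3) = 2 := by decide
      rw [this]
      left; rfl
    · -- k odd : luc(3k) * fib(3k+3) = 32 x²
      have hid := id2 (3 * k)
      rw [show 2 * (3 * k) + 3 = 6 * k + 3 by ring] at hid
      have hev : ((-1 : ℤ)) ^ (3 * k) = -1 := Odd.neg_one_pow ⟨3 * i + 1, by omega⟩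
      rw [hev] at hid
      have hprod : (fib (3 * k + 3) : ℤ) * luc (3 * k) = 32 * x ^ 2 := by
        rw [hid] at h32; linarith
      obtain ⟨y, hy⟩ := final_step (fib (3 * k + 3)) (luc (3 * k)) x
        (fib8 (by omega)) (luc4 (by omega))
        (fun p hp hp2 hpf hpl => by
          have hlin := lin2 (3 * k)
          have h4l : (p : ℤ) ∣ 4 * (fib (3 * k) : ℤ) := by
            have : (4 : ℤ) * fib (3 * k) = 2 * fib (3 * k + 3) - 2 * luc (3 * k) := by
              linarith
            rw [this]
            exact dvd_sub (hpf.mul_left 2) (hpl.mul_left 2)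
          exact not_dvd_both hp hp2 (3 * k)
            (odd_prime_dvd_of_dvd_four_mul hp hp2 h4l) hpl)
        hprod
      have hodd3 : (3 * k) % 2 = 1 := by omega
      have := luc_odd_square hodd3 hy
      have hk1 : k = 1 := by omega
      subst hk1
      have : fib (6 * 1 + 3) = 34 := by decide
      rw [this]
      right; rfl
  · intro h
    simp only [Set.mem_insert_iff, Set.mem_singleton_iff] at h
    rcases h with h | h
    · exact ⟨0, by rw [h]; norm_num⟩
    · exact ⟨4, by rw [h]; norm_num⟩
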